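/- Let {d(t)}_{t≥0} be nonnegative reals with Σ_{t=0}^∞ d(t)·sup_{ℓ≥t} d(ℓ) < ∞ and let 0 < λ < 1. Then Σ_{t=1}^∞ d(t)·(Σ_{k=0}^{t−1} d(k)·λ^{t−k−1}) < ∞ and lim_{t→∞} Σ_{k=0}^{t−1} λ^{t−k−1} d(k) = 0. -/

import Mathlib

theorem stepsize_summability (d : ℕ → ℝ) (hd : ∀ t, 0 ≤ d t)
    (hbdd : BddAbove (Set.range d))
    (hsum : Summable fun t => d t * ⨆ ℓ : ℕ, d (t + ℓ))
    (lam : ℝ) (hlam0 : 0 < lam) (hlam1 : lam < 1) :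
    (Summable fun t => d t * ∑ k ∈ Finset.range t, d k * lam ^ (t - k - 1)) ∧
      Filter.Tendsto (fun t => ∑ k ∈ Finset.range t, lam ^ (t - k - 1) * d k)
        Filter.atTop (nhds 0) := by
  set S : ℕ → ℝ := fun t => ⨆ ℓ : ℕ, d (t + ℓ) with hSdef
  -- basic facts about S
  have hSb : ∀ t, BddAbove (Set.range fun ℓ => d (t + ℓ)) := by
    intro t
    exact BddAbove.mono (Set.range_subset_iff.2 fun ℓ => Set.mem_range_self (t + ℓ)) hbdd
  have hSle : ∀ t m, t ≤ m → d m ≤ S t := by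
    intro t m htm
    have := le_ciSup (hSb t) (m - t)
    simpa [Nat.add_sub_cancel' htm] using this
  have hS0 : ∀ t, 0 ≤ S t := fun t => (hd t).trans (hSle t t le_rfl)
  -- geometric bound
  have hgeom : ∀ n, ∑ j ∈ Finset.range n, lam ^ j ≤ (1 - lam)⁻¹ := by
    intro n
    have h := Summable.sum_le_tsum (Finset.range n) (fun i _ => pow_nonneg hlam0.le i)
      (summable_geometric_of_lt_one hlam0.le hlam1)
    rwa [tsum_geometric_of_lt_one hlam0.le hlam1] at h
  -- d tends to zero
  have hsq : Summable fun t => d t ^ 2 := by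
    refine Summable.of_nonneg_of_le (fun t => sq_nonneg _) (fun t => ?_) hsum
    rw [sq]
    exact mul_le_mul_of_nonneg_left (hSle t t le_rfl) (hd t)
  have hd0 : Filter.Tendsto d Filter.atTop (nhds 0) := by
    have h2 := hsq.tendsto_atTop_zero
    have h3 : Filter.Tendsto (fun t => Real.sqrt (d t ^ 2)) Filter.atTop (nhds (Real.sqrt 0)) :=
      (Real.continuous_sqrt.tendsto 0).comp h2
    have he : (fun t => Real.sqrt (d t ^ 2)) = d := funext fun t => Real.sqrt_sq (hd t)
    rw [he, Real.sqrt_zero] at h3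
    exact h3
  constructor
  · -- Summability
    refine summable_of_sum_range_le (c := (∑' k, d k * S k) * (1 - lam)⁻¹)
      (fun t => mul_nonneg (hd t) (Finset.sum_nonneg fun k _ =>
        mul_nonneg (hd k) (pow_nonneg hlam0.le _)))
      (fun n => ?_)
    calc
      ∑ t ∈ Finset.range n, d t * ∑ k ∈ Finset.range t, d k * lam ^ (t - k - 1)
          = ∑ t ∈ Finset.range n, ∑ k ∈ Finset.range t, d t * d k * lam ^ (t - k - 1) := by
            refine Finset.sum_congr rfl fun t _ => ?_
            rw [Finset.mul_sum]
            exact Finset.sum_congr rfl fun k _ => by ring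
      _ ≤ ∑ t ∈ Finset.range n, ∑ k ∈ Finset.range t, (d k * S k) * lam ^ (t - k - 1) := by
            refine Finset.sum_le_sum fun t _ => Finset.sum_le_sum fun k hk => ?_
            have hkt : k ≤ t := (Finset.mem_range.1 hk).le
            have : d t * d k ≤ d k * S k := by
              rw [mul_comm]
              exact mul_le_mul_of_nonneg_left (hSle k t hkt) (hd k)
            exact mul_le_mul_of_nonneg_right this (pow_nonneg hlam0.le _)
      _ = ∑ k ∈ Finset.range n, ∑ t ∈ Finset.Ico (k + 1) n, (d k * S k) * lam ^ (t - k - 1) := by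
            simp only [Finset.range_eq_Ico]
            exact (Finset.sum_Ico_Ico_comm' 0 n fun k t => (d k * S k) * lam ^ (t - k - 1)).symm
      _ ≤ ∑ k ∈ Finset.range n, (d k * S k) * (1 - lam)⁻¹ := by
            refine Finset.sum_le_sum fun k _ => ?_
            rw [← Finset.mul_sum]
            refine mul_le_mul_of_nonneg_left ?_ (mul_nonneg (hd k) (hS0 k))
            calc
              ∑ t ∈ Finset.Ico (k + 1) n, lam ^ (t - k - 1)
                  = ∑ j ∈ Finset.range (n - (k + 1)), lam ^ j := by
                    rw [Finset.sum_Ico_eq_sum_range]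
                    exact Finset.sum_congr rfl fun j _ => by
                      congr 1
                      omega
              _ ≤ (1 - lam)⁻¹ := hgeom _
      _ = (∑ k ∈ Finset.range n, d k * S k) * (1 - lam)⁻¹ := by
            rw [Finset.sum_mul]
      _ ≤ (∑' k, d k * S k) * (1 - lam)⁻¹ := by
            refine mul_le_mul_of_nonneg_right ?_ (inv_nonneg.2 (by linarith))
            exact Summable.sum_le_tsum _ (fun k _ => mul_nonneg (hd k) (hS0 k)) hsum
  · -- Tendsto 0
    have hnonneg : ∀ t, 0 ≤ ∑ k ∈ Finset.range t, lam ^ (t - k - 1) * d k :=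
      fun t => Finset.sum_nonneg fun k _ => mul_nonneg (pow_nonneg hlam0.le _) (hd k)
    rw [Metric.tendsto_atTop]
    intro ε hε
    have hden : 0 < 1 - lam := by linarith
    have hε2 : 0 < ε * (1 - lam) / 2 := by positivity
    obtain ⟨N, hN⟩ := (Metric.tendsto_atTop.1 hd0) (ε * (1 - lam) / 2) hε2
    set C : ℝ := ∑ k ∈ Finset.range N, lam ^ (N - k - 1) * d k with hC
    have hC0 : 0 ≤ C := hnonneg N
    -- λ^(t-N) * C → 0
    have htend : Filter.Tendsto (fun t : ℕ => lam ^ (t - N) * C) Filter.atTop (nhds 0) := by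
      have h1 : Filter.Tendsto (fun m : ℕ => lam ^ m * C) Filter.atTop (nhds 0) := by
        simpa using (tendsto_pow_atTop_nhds_zero_of_lt_one hlam0.le hlam1).mul_const C
      exact h1.comp (Filter.tendsto_atTop_atTop.2 fun b => ⟨b + N, fun a ha => by omega⟩)
    obtain ⟨M, hM⟩ := (Metric.tendsto_atTop.1 htend) (ε / 2) (by positivity)
    refine ⟨max N M, fun t ht => ?_⟩
    have htN : N ≤ t := le_of_max_le_left ht
    have htM : M ≤ t := le_of_max_le_right ht
    rw [Real.dist_eq, sub_zero, abs_of_nonneg (hnonneg t)]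
    have hsplit : ∑ k ∈ Finset.range t, lam ^ (t - k - 1) * d k
        = ∑ k ∈ Finset.range N, lam ^ (t - k - 1) * d k
          + ∑ k ∈ Finset.Ico N t, lam ^ (t - k - 1) * d k := by
      rw [Finset.range_eq_Ico, Finset.range_eq_Ico]
      exact (Finset.sum_Ico_consecutive _ (Nat.zero_le N) htN).symm
    rw [hsplit]
    have h1 : ∑ k ∈ Finset.range N, lam ^ (t - k - 1) * d k = lam ^ (t - N) * C := by
      rw [hC, Finset.mul_sum]
      refine Finset.sum_congr rfl fun k hk => ?_
      have hkN : k < N := Finset.mem_range.1 hk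
      rw [← mul_assoc, ← pow_add]
      congr 2
      omega
    have hb1 : lam ^ (t - N) * C < ε / 2 := by
      have := hM t htM
      rwa [Real.dist_eq, sub_zero,
        abs_of_nonneg (mul_nonneg (pow_nonneg hlam0.le _) hC0)] at this
    have hb2 : ∑ k ∈ Finset.Ico N t, lam ^ (t - k - 1) * d k ≤ ε / 2 := by
      calc
        ∑ k ∈ Finset.Ico N t, lam ^ (t - k - 1) * d k
            ≤ ∑ k ∈ Finset.Ico N t, lam ^ (t - k - 1) * (ε * (1 - lam) / 2) := by
              refine Finset.sum_le_sum fun k hk => ?_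
              have hkN : N ≤ k := (Finset.mem_Ico.1 hk).1
              have hdk : d k < ε * (1 - lam) / 2 := by
                have := hN k hkN
                rwa [Real.dist_eq, sub_zero, abs_of_nonneg (hd k)] at this
              exact mul_le_mul_of_nonneg_left hdk.le (pow_nonneg hlam0.le _)
        _ = (∑ k ∈ Finset.Ico N t, lam ^ (t - k - 1)) * (ε * (1 - lam) / 2) := by
              rw [Finset.sum_mul]
        _ ≤ (1 - lam)⁻¹ * (ε * (1 - lam) / 2) := by
              refine mul_le_mul_of_nonneg_right ?_ (by positivity)
              calc
                ∑ k ∈ Finset.Ico N t, lam ^ (t - k - 1)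
                    = ∑ j ∈ Finset.range (t - N), lam ^ (t - (N + j) - 1) := by
                      rw [Finset.sum_Ico_eq_sum_range]
                _ ≤ ∑ j ∈ Finset.range (t - N), lam ^ (t - N - 1 - j) := by
                      refine Finset.sum_le_sum fun j hj => ?_
                      have : t - (N + j) - 1 = t - N - 1 - j := by omega
                      rw [this]
                _ = ∑ j ∈ Finset.range (t - N), lam ^ j := by
                      have := Finset.sum_range_reflect (fun j => lam ^ j) (t - N)
                      simpa using this
                _ ≤ (1 - lam)⁻¹ := hgeom _
        _ = ε / 2 * ((1 - lam)⁻¹ * (1 - lam)) := by ring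
        _ = ε / 2 := by rw [inv_mul_cancel₀ (ne_of_gt hden), mul_one]
    linarith
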